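/- Let {a, b} be a polyphase Golay sequence pair of length L and {c, d} a polyphase Golay sequence pair of length M. Define the 2L×M matrices A and B by: A[i,j] = a[i]·c[j] for 0 ≤ i < L and A[L+i, j] = b[i]·d[j] for 0 ≤ i < L; B[i,j] = −a[i]·conj(d[M−1−j]) for 0 ≤ i < L and B[L+i, j] = b[i]·conj(c[M−1−j]) for 0 ≤ i < L. Then {A, B} is a polyphase GCM pair of size 2L×M. -/

import Mathlib

open scoped BigOperators

/-- Aperiodic autocorrelation of a complex sequence (indexed by ℤ). -/
noncomputable def seqAutocorr (a : ℤ → ℂ) (δ : ℤ) : ℂ :=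
  ∑ᶠ i : ℤ, a i * (starRingEnd ℂ) (a (i - δ))

/-- Weight of a sequence. -/
noncomputable def seqWeight (a : ℤ → ℂ) : ℝ :=
  ∑ᶠ i : ℤ, ‖a i‖ ^ 2

/-- Index lies in `[0, L)`. -/
def seqInBox (L : ℕ) (i : ℤ) : Prop := 0 ≤ i ∧ i < (L : ℤ)

/-- A polyphase sequence of length `L`: zero outside `[0, L)` and all entries inside
are `N`-th roots of unity for some `N`. -/
def seqPolyphase (L : ℕ) (a : ℤ → ℂ) : Prop :=
  (∀ i, ¬ seqInBox L i → a i = 0) ∧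
    ∃ N : ℕ, 0 < N ∧ ∀ i, seqInBox L i → a i ^ N = 1

/-- Aperiodic autocorrelation of a complex matrix (indexed by ℤ × ℤ). -/
noncomputable def matAutocorr (A : ℤ → ℤ → ℂ) (δ₁ δ₂ : ℤ) : ℂ :=
  ∑ᶠ (i : ℤ) (j : ℤ), A i j * (starRingEnd ℂ) (A (i - δ₁) (j - δ₂))

/-- Weight of a matrix. -/
noncomputable def matWeight (A : ℤ → ℤ → ℂ) : ℝ :=
  ∑ᶠ (i : ℤ) (j : ℤ), ‖A i j‖ ^ 2

/-- Index pair lies in `[0, m) × [0, n)`. -/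
def matInBox (m n : ℕ) (i j : ℤ) : Prop :=
  0 ≤ i ∧ i < (m : ℤ) ∧ 0 ≤ j ∧ j < (n : ℤ)

/-- A polyphase matrix of size `m × n`. -/
def matPolyphase (m n : ℕ) (A : ℤ → ℤ → ℂ) : Prop :=
  (∀ i j, ¬ matInBox m n i j → A i j = 0) ∧
    ∃ N : ℕ, 0 < N ∧ ∀ i j, matInBox m n i j → A i j ^ N = 1

section Aux
open Function

noncomputable def cc (p q : ℤ → ℂ) (δ : ℤ) : ℂ :=
  ∑ᶠ i : ℤ, p i * (starRingEnd ℂ) (q (i - δ))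

lemma supp_fin {L : ℕ} {a : ℤ → ℂ} (h : ∀ i, ¬ seqInBox L i → a i = 0) :
    (Function.support a).Finite := by
  apply (Set.finite_Ico (0 : ℤ) L).subset
  intro i hi
  by_contra hc
  exact hi (h i fun hb => hc ⟨hb.1, hb.2⟩)

lemma supp_fin_shift {f : ℤ → ℂ} (hf : (support f).Finite) (T : ℤ) :
    (Function.support fun i => f (i - T)).Finite :=
  hf.preimage (fun x _ y _ h => by omega)

lemma supp_fin_rev {f : ℤ → ℂ} (hf : (support f).Finite) (K : ℤ) :
    (Function.support fun j => (starRingEnd ℂ) (f (K - j))).Finite := by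
  have h1 : ((fun j : ℤ => K - j) ⁻¹' (support f)).Finite :=
    hf.preimage (fun x _ y _ h => by omega)
  apply h1.subset
  intro j hj
  simp only [Function.mem_support] at hj
  simp only [Set.mem_preimage, Function.mem_support]
  intro h0
  exact hj (by rw [h0, map_zero])

lemma supp_mul_left (f g : ℤ → ℂ) :
    (Function.support fun i => f i * g i) ⊆ Function.support f := by
  intro i hi
  simp only [Function.mem_support] at hi ⊢
  exact fun h => hi (by rw [h, zero_mul])

lemma supp_mul_right (f g : ℤ → ℂ) :
    (Function.support fun i => f i * g i) ⊆ Function.support g := by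
  intro i hi
  simp only [Function.mem_support] at hi ⊢
  exact fun h => hi (by rw [h, mul_zero])

/-- split a finsum of a 4-fold sum -/
lemma finsum_add4 (f g h k : ℤ → ℂ) (hf : (support f).Finite) (hg : (support g).Finite)
    (hh : (support h).Finite) (hk : (support k).Finite) :
    (∑ᶠ j : ℤ, (f j + g j + (h j + k j))) =
      (∑ᶠ j, f j) + (∑ᶠ j, g j) + ((∑ᶠ j, h j) + (∑ᶠ j, k j)) := by
  have hfg : (support fun j => f j + g j).Finite :=
    (hf.union hg).subset (Function.support_add _ _)
  have hhk : (support fun j => h j + k j).Finite :=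
    (hh.union hk).subset (Function.support_add _ _)
  rw [finsum_add_distrib hfg hhk, finsum_add_distrib hf hg, finsum_add_distrib hh hk]

/-- the main expansion: autocorrelation of a sum of two rank-one arrays -/
lemma matAutocorr_two (p q p' q' : ℤ → ℂ)
    (hp : (support p).Finite) (hq : (support q).Finite)
    (hp' : (support p').Finite) (hq' : (support q').Finite) (δ₁ δ₂ : ℤ) :
    matAutocorr (fun i j => p i * q j + p' i * q' j) δ₁ δ₂ =
      cc p p δ₁ * cc q q δ₂ + cc p p' δ₁ * cc q q' δ₂ +
      (cc p' p δ₁ * cc q' q δ₂ + cc p' p' δ₁ * cc q' q' δ₂) := by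
  set S1 := cc q q δ₂ with hS1
  set S2 := cc q q' δ₂ with hS2
  set S3 := cc q' q δ₂ with hS3
  set S4 := cc q' q' δ₂ with hS4
  have hV1 : (support fun j => q j * (starRingEnd ℂ) (q (j - δ₂))).Finite :=
    hq.subset (supp_mul_left _ _)
  have hV2 : (support fun j => q j * (starRingEnd ℂ) (q' (j - δ₂))).Finite :=
    hq.subset (supp_mul_left _ _)
  have hV3 : (support fun j => q' j * (starRingEnd ℂ) (q (j - δ₂))).Finite :=
    hq'.subset (supp_mul_left _ _)
  have hV4 : (support fun j => q' j * (starRingEnd ℂ) (q' (j - δ₂))).Finite :=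
    hq'.subset (supp_mul_left _ _)
  have expand : matAutocorr (fun i j => p i * q j + p' i * q' j) δ₁ δ₂ =
      ∑ᶠ i : ℤ, ∑ᶠ j : ℤ, ((p i * q j + p' i * q' j) *
        (starRingEnd ℂ) (p (i - δ₁) * q (j - δ₂) + p' (i - δ₁) * q' (j - δ₂))) := rfl
  rw [expand]
  have hpt : ∀ i j : ℤ,
      (p i * q j + p' i * q' j) *
        (starRingEnd ℂ) (p (i - δ₁) * q (j - δ₂) + p' (i - δ₁) * q' (j - δ₂)) =
      (p i * (starRingEnd ℂ) (p (i - δ₁))) * (q j * (starRingEnd ℂ) (q (j - δ₂))) +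
      (p i * (starRingEnd ℂ) (p' (i - δ₁))) * (q j * (starRingEnd ℂ) (q' (j - δ₂))) +
      ((p' i * (starRingEnd ℂ) (p (i - δ₁))) * (q' j * (starRingEnd ℂ) (q (j - δ₂))) +
       (p' i * (starRingEnd ℂ) (p' (i - δ₁))) * (q' j * (starRingEnd ℂ) (q' (j - δ₂)))) := by
    intro i j; simp only [map_add, map_mul]; ring
  have hinner : ∀ i : ℤ,
      (∑ᶠ j : ℤ, ((p i * q j + p' i * q' j) *
        (starRingEnd ℂ) (p (i - δ₁) * q (j - δ₂) + p' (i - δ₁) * q' (j - δ₂)))) =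
      (p i * (starRingEnd ℂ) (p (i - δ₁))) * S1 +
      (p i * (starRingEnd ℂ) (p' (i - δ₁))) * S2 +
      ((p' i * (starRingEnd ℂ) (p (i - δ₁))) * S3 +
       (p' i * (starRingEnd ℂ) (p' (i - δ₁))) * S4) := by
    intro i
    rw [finsum_congr (hpt i)]
    rw [finsum_add4 _ _ _ _
      (hV1.subset (supp_mul_right _ _)) (hV2.subset (supp_mul_right _ _))
      (hV3.subset (supp_mul_right _ _)) (hV4.subset (supp_mul_right _ _))]
    rw [← mul_finsum _ _, ← mul_finsum _ _, ← mul_finsum _ _,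
      ← mul_finsum _ _]
    rfl
  rw [finsum_congr hinner]
  have hU1 : (support fun i => (p i * (starRingEnd ℂ) (p (i - δ₁))) * S1).Finite :=
    (hp.subset (supp_mul_left _ _)).subset (supp_mul_left _ _)
  have hU2 : (support fun i => (p i * (starRingEnd ℂ) (p' (i - δ₁))) * S2).Finite :=
    (hp.subset (supp_mul_left _ _)).subset (supp_mul_left _ _)
  have hU3 : (support fun i => (p' i * (starRingEnd ℂ) (p (i - δ₁))) * S3).Finite :=
    (hp'.subset (supp_mul_left _ _)).subset (supp_mul_left _ _)
  have hU4 : (support fun i => (p' i * (starRingEnd ℂ) (p' (i - δ₁))) * S4).Finite :=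
    (hp'.subset (supp_mul_left _ _)).subset (supp_mul_left _ _)
  rw [finsum_add4 _ _ _ _ hU1 hU2 hU3 hU4]
  rw [← finsum_mul _ _,
    ← finsum_mul _ _,
    ← finsum_mul _ _,
    ← finsum_mul _ _]
  rfl

lemma cc_shift (p q : ℤ → ℂ) (T δ : ℤ) :
    cc (fun i => p (i - T)) (fun i => q (i - T)) δ = cc p q δ := by
  show (∑ᶠ i : ℤ, p (i - T) * (starRingEnd ℂ) (q (i - δ - T))) =
    ∑ᶠ i : ℤ, p i * (starRingEnd ℂ) (q (i - δ))
  rw [← finsum_comp_equiv (Equiv.addRight T)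
    (f := fun i => p (i - T) * (starRingEnd ℂ) (q (i - δ - T)))]
  apply finsum_congr
  intro k
  simp only [Equiv.coe_addRight]
  have h1 : k + T - T = k := by ring
  have h2 : k + T - δ - T = k - δ := by ring
  rw [h1, h2]

lemma cc_rev (g h : ℤ → ℂ) (K δ : ℤ) :
    cc (fun j => (starRingEnd ℂ) (g (K - j))) (fun j => (starRingEnd ℂ) (h (K - j))) δ =
      cc h g δ := by
  show (∑ᶠ j : ℤ, (starRingEnd ℂ) (g (K - j)) *
      (starRingEnd ℂ) ((starRingEnd ℂ) (h (K - (j - δ))))) =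
    ∑ᶠ m : ℤ, h m * (starRingEnd ℂ) (g (m - δ))
  rw [← finsum_comp_equiv (Equiv.subLeft (K + δ))
    (f := fun j => (starRingEnd ℂ) (g (K - j)) *
      (starRingEnd ℂ) ((starRingEnd ℂ) (h (K - (j - δ)))))]
  apply finsum_congr
  intro m
  simp only [Equiv.subLeft_apply, Complex.conj_conj]
  have h1 : K - (K + δ - m) = m - δ := by ring
  have h2 : K - (K + δ - m - δ) = m := by ring
  rw [h1, h2, mul_comm]

lemma cc_neg_left (p q : ℤ → ℂ) (δ : ℤ) : cc (fun i => -p i) q δ = -cc p q δ := by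
  show (∑ᶠ i : ℤ, -p i * (starRingEnd ℂ) (q (i - δ))) = -∑ᶠ i : ℤ, p i * (starRingEnd ℂ) (q (i - δ))
  rw [← finsum_neg_distrib]
  exact finsum_congr fun i => by ring

lemma cc_neg_right (p q : ℤ → ℂ) (δ : ℤ) : cc p (fun i => -q i) δ = -cc p q δ := by
  show (∑ᶠ i : ℤ, p i * (starRingEnd ℂ) (-q (i - δ))) = -∑ᶠ i : ℤ, p i * (starRingEnd ℂ) (q (i - δ))
  rw [← finsum_neg_distrib]
  exact finsum_congr fun i => by rw [map_neg]; ring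

lemma cc_neg_neg (p q : ℤ → ℂ) (δ : ℤ) :
    cc (fun i => -p i) (fun i => -q i) δ = cc p q δ := by
  rw [cc_neg_left, cc_neg_right, neg_neg]

lemma norm_sq_supp (a : ℤ → ℂ) :
    (Function.support fun i => ‖a i‖ ^ 2) ⊆ Function.support a := by
  intro i hi
  simp only [Function.mem_support] at hi ⊢
  exact fun h => hi (by rw [h]; simp)

lemma seqWeight_cast (a : ℤ → ℂ) (hfin : (support a).Finite) :
    ((seqWeight a : ℝ) : ℂ) = seqAutocorr a 0 := by
  show Complex.ofRealHom.toAddMonoidHom (∑ᶠ i : ℤ, ‖a i‖ ^ 2) = _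
  rw [AddMonoidHom.map_finsum _ (hfin.subset (norm_sq_supp a))]
  apply finsum_congr
  intro i
  show ((‖a i‖ ^ 2 : ℝ) : ℂ) = a i * (starRingEnd ℂ) (a (i - 0))
  rw [sub_zero, Complex.mul_conj']
  push_cast; ring

lemma matWeight_cast {m n : ℕ} (A : ℤ → ℤ → ℂ)
    (h0 : ∀ i j, ¬ matInBox m n i j → A i j = 0) :
    ((matWeight A : ℝ) : ℂ) = matAutocorr A 0 0 := by
  have hrow : ∀ i : ℤ, (Function.support fun j => ‖A i j‖ ^ 2).Finite := by
    intro i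
    apply (Set.finite_Ico (0 : ℤ) n).subset
    intro j hj
    simp only [Function.mem_support] at hj
    by_contra hc
    exact hj (by rw [h0 i j (fun hb => hc ⟨hb.2.2.1, hb.2.2.2⟩)]; simp)
  have houter : (Function.support fun i => ∑ᶠ j : ℤ, ‖A i j‖ ^ 2).Finite := by
    apply (Set.finite_Ico (0 : ℤ) m).subset
    intro i hi
    simp only [Function.mem_support] at hi
    by_contra hc
    apply hi
    have : ∀ j : ℤ, ‖A i j‖ ^ 2 = (0 : ℝ) := by
      intro j
      rw [h0 i j (fun hb => hc ⟨hb.1, hb.2.1⟩)]; simp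
    rw [finsum_congr this, finsum_zero]
  show Complex.ofRealHom.toAddMonoidHom (∑ᶠ (i : ℤ) (j : ℤ), ‖A i j‖ ^ 2) = _
  rw [AddMonoidHom.map_finsum _ houter]
  apply finsum_congr
  intro i
  show Complex.ofRealHom.toAddMonoidHom (∑ᶠ j : ℤ, ‖A i j‖ ^ 2) = _
  rw [AddMonoidHom.map_finsum _ (hrow i)]
  apply finsum_congr
  intro j
  show ((‖A i j‖ ^ 2 : ℝ) : ℂ) = A i j * (starRingEnd ℂ) (A (i - 0) (j - 0))
  rw [sub_zero, sub_zero, Complex.mul_conj']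
  push_cast; ring

lemma pow_eq_one_dvd {x : ℂ} {m n : ℕ} (h : x ^ m = 1) (hd : m ∣ n) : x ^ n = 1 := by
  obtain ⟨k, rfl⟩ := hd; rw [pow_mul, h, one_pow]

lemma key_corr (L M : ℕ) (a b c d : ℤ → ℂ)
    (ha0 : ∀ i, ¬ seqInBox L i → a i = 0) (hb0 : ∀ i, ¬ seqInBox L i → b i = 0)
    (hc0 : ∀ i, ¬ seqInBox M i → c i = 0) (hd0 : ∀ i, ¬ seqInBox M i → d i = 0)
    (A B : ℤ → ℤ → ℂ)
    (hA : A = fun i j => if i < (L : ℤ) then a i * c j else b (i - L) * d j)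
    (hB : B = fun i j => if i < (L : ℤ) then
        -a i * (starRingEnd ℂ) (d ((M : ℤ) - 1 - j))
      else b (i - L) * (starRingEnd ℂ) (c ((M : ℤ) - 1 - j)))
    (δ₁ δ₂ : ℤ) :
    matAutocorr A δ₁ δ₂ + matAutocorr B δ₁ δ₂ =
      (seqAutocorr a δ₁ + seqAutocorr b δ₁) * (seqAutocorr c δ₂ + seqAutocorr d δ₂) := by
  have hfa := supp_fin ha0
  have hfb := supp_fin hb0
  have hfc := supp_fin hc0
  have hfd := supp_fin hd0
  have hfb' := supp_fin_shift hfb (L : ℤ)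
  have hfna : (support fun i => -a i).Finite :=
    hfa.subset (by
      intro i hi
      simp only [Function.mem_support] at hi ⊢
      exact fun h => hi (by rw [h, neg_zero]))
  have hfe := supp_fin_rev hfd ((M : ℤ) - 1)
  have hff := supp_fin_rev hfc ((M : ℤ) - 1)
  have hAeq : A = fun i j => a i * c j + b (i - (L : ℤ)) * d j := by
    rw [hA]; funext i j
    by_cases h : i < (L : ℤ)
    · simp only [if_pos h]
      rw [hb0 (i - (L : ℤ)) (fun hb2 => by have := hb2.1; omega)]
      ring
    · simp only [if_neg h]
      rw [ha0 i (fun hb2 => by have := hb2.2; omega)]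
      ring
  have hBeq : B = fun i j => -a i * (starRingEnd ℂ) (d ((M : ℤ) - 1 - j)) +
      b (i - (L : ℤ)) * (starRingEnd ℂ) (c ((M : ℤ) - 1 - j)) := by
    rw [hB]; funext i j
    by_cases h : i < (L : ℤ)
    · simp only [if_pos h]
      rw [hb0 (i - (L : ℤ)) (fun hb2 => by have := hb2.1; omega)]
      ring
    · simp only [if_neg h]
      rw [ha0 i (fun hb2 => by have := hb2.2; omega)]
      ring
  have e1 : matAutocorr A δ₁ δ₂ =
      cc a a δ₁ * cc c c δ₂ + cc a (fun i => b (i - (L : ℤ))) δ₁ * cc c d δ₂ +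
      (cc (fun i => b (i - (L : ℤ))) a δ₁ * cc d c δ₂ +
       cc (fun i => b (i - (L : ℤ))) (fun i => b (i - (L : ℤ))) δ₁ * cc d d δ₂) := by
    rw [hAeq]
    exact matAutocorr_two a c (fun i => b (i - (L : ℤ))) d hfa hfc hfb' hfd δ₁ δ₂
  have e2 : matAutocorr B δ₁ δ₂ =
      cc (fun i => -a i) (fun i => -a i) δ₁ *
        cc (fun j => (starRingEnd ℂ) (d ((M : ℤ) - 1 - j)))
          (fun j => (starRingEnd ℂ) (d ((M : ℤ) - 1 - j))) δ₂ +
      cc (fun i => -a i) (fun i => b (i - (L : ℤ))) δ₁ *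
        cc (fun j => (starRingEnd ℂ) (d ((M : ℤ) - 1 - j)))
          (fun j => (starRingEnd ℂ) (c ((M : ℤ) - 1 - j))) δ₂ +
      (cc (fun i => b (i - (L : ℤ))) (fun i => -a i) δ₁ *
        cc (fun j => (starRingEnd ℂ) (c ((M : ℤ) - 1 - j)))
          (fun j => (starRingEnd ℂ) (d ((M : ℤ) - 1 - j))) δ₂ +
       cc (fun i => b (i - (L : ℤ))) (fun i => b (i - (L : ℤ))) δ₁ *
        cc (fun j => (starRingEnd ℂ) (c ((M : ℤ) - 1 - j)))
          (fun j => (starRingEnd ℂ) (c ((M : ℤ) - 1 - j))) δ₂) := by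
    rw [hBeq]
    exact matAutocorr_two (fun i => -a i) (fun j => (starRingEnd ℂ) (d ((M : ℤ) - 1 - j)))
      (fun i => b (i - (L : ℤ))) (fun j => (starRingEnd ℂ) (c ((M : ℤ) - 1 - j)))
      hfna hfe hfb' hff δ₁ δ₂
  have hsa : seqAutocorr a δ₁ = cc a a δ₁ := rfl
  have hsb : seqAutocorr b δ₁ = cc b b δ₁ := rfl
  have hsc : seqAutocorr c δ₂ = cc c c δ₂ := rfl
  have hsd : seqAutocorr d δ₂ = cc d d δ₂ := rfl
  rw [e1, e2, hsa, hsb, hsc, hsd, cc_neg_neg, cc_neg_left, cc_neg_right,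
    cc_shift b b (L : ℤ) δ₁, cc_rev d d ((M : ℤ) - 1) δ₂, cc_rev d c ((M : ℤ) - 1) δ₂,
    cc_rev c d ((M : ℤ) - 1) δ₂, cc_rev c c ((M : ℤ) - 1) δ₂]
  ring

end Aux

/-- from polyphase Golay sequence pairs {a,b} of length L and {c,d} of
length M, the 2L×M matrices A, B with A[i,j] = a[i]c[j], A[L+i,j] = b[i]d[j],
B[i,j] = −a[i]·conj(d[M−1−j]), B[L+i,j] = b[i]·conj(c[M−1−j]) (0 ≤ i < L) form a
polyphase GCM pair of size 2L×M. -/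
theorem stmt6 (L M : ℕ) (a b c d : ℤ → ℂ)
    (ha : seqPolyphase L a) (hb : seqPolyphase L b)
    (hab : ∀ δ : ℤ, seqAutocorr a δ + seqAutocorr b δ =
      if δ = 0 then ((seqWeight a + seqWeight b : ℝ) : ℂ) else 0)
    (hc : seqPolyphase M c) (hd : seqPolyphase M d)
    (hcd : ∀ δ : ℤ, seqAutocorr c δ + seqAutocorr d δ =
      if δ = 0 then ((seqWeight c + seqWeight d : ℝ) : ℂ) else 0)
    (A B : ℤ → ℤ → ℂ)
    (hA : A = fun i j => if i < (L : ℤ) then a i * c j else b (i - L) * d j)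
    (hB : B = fun i j => if i < (L : ℤ) then
        -a i * (starRingEnd ℂ) (d ((M : ℤ) - 1 - j))
      else b (i - L) * (starRingEnd ℂ) (c ((M : ℤ) - 1 - j))) :
    matPolyphase (2 * L) M A ∧ matPolyphase (2 * L) M B ∧
      ∀ δ₁ δ₂ : ℤ, matAutocorr A δ₁ δ₂ + matAutocorr B δ₁ δ₂ =
        if δ₁ = 0 ∧ δ₂ = 0 then ((matWeight A + matWeight B : ℝ) : ℂ) else 0 := by
  obtain ⟨Na, hNa, hra⟩ := ha.2
  obtain ⟨Nb, hNb, hrb⟩ := hb.2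
  obtain ⟨Nc, hNc, hrc⟩ := hc.2
  obtain ⟨Nd, hNd, hrd⟩ := hd.2
  -- zero outside the box
  have hAz : ∀ i j, ¬ matInBox (2 * L) M i j → A i j = 0 := by
    intro i j hbox
    rw [hA]
    by_cases hj : seqInBox M j
    · have hi2 : ¬ (0 ≤ i ∧ i < ((2 * L : ℕ) : ℤ)) := fun hh => hbox ⟨hh.1, hh.2, hj.1, hj.2⟩
      by_cases h : i < (L : ℤ)
      · simp only [if_pos h]
        rw [ha.1 i (fun hb2 => hi2 ⟨hb2.1, by have := hb2.2; push_cast; omega⟩), zero_mul]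
      · simp only [if_neg h]
        rw [hb.1 (i - (L : ℤ))
          (fun hb2 => hi2 ⟨by have := hb2.1; omega, by have := hb2.2; push_cast; omega⟩),
          zero_mul]
    · have hcz : c j = 0 := hc.1 j hj
      have hdz : d j = 0 := hd.1 j hj
      by_cases h : i < (L : ℤ) <;> simp [h, hcz, hdz]
  have hBz : ∀ i j, ¬ matInBox (2 * L) M i j → B i j = 0 := by
    intro i j hbox
    rw [hB]
    by_cases hj : seqInBox M j
    · have hi2 : ¬ (0 ≤ i ∧ i < ((2 * L : ℕ) : ℤ)) := fun hh => hbox ⟨hh.1, hh.2, hj.1, hj.2⟩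
      by_cases h : i < (L : ℤ)
      · simp only [if_pos h]
        rw [ha.1 i (fun hb2 => hi2 ⟨hb2.1, by have := hb2.2; push_cast; omega⟩)]
        ring
      · simp only [if_neg h]
        rw [hb.1 (i - (L : ℤ))
          (fun hb2 => hi2 ⟨by have := hb2.1; omega, by have := hb2.2; push_cast; omega⟩),
          zero_mul]
    · have hdz : d ((M : ℤ) - 1 - j) = 0 := hd.1 _ (fun hb2 => by
        have h1 := hb2.1; have h2 := hb2.2
        exact hj ⟨by omega, by omega⟩)
      have hcz : c ((M : ℤ) - 1 - j) = 0 := hc.1 _ (fun hb2 => by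
        have h1 := hb2.1; have h2 := hb2.2
        exact hj ⟨by omega, by omega⟩)
      by_cases h : i < (L : ℤ) <;> simp [h, hcz, hdz]
  -- roots of unity
  have hpolyA : matPolyphase (2 * L) M A := by
    refine ⟨hAz, 2 * Na * Nb * Nc * Nd, by positivity, ?_⟩
    intro i j hbox
    obtain ⟨hi0, hi2, hj0, hjM⟩ := hbox
    rw [hA]
    by_cases h : i < (L : ℤ)
    · simp only [if_pos h]
      rw [mul_pow, pow_eq_one_dvd (hra i ⟨hi0, h⟩) ⟨2 * Nb * Nc * Nd, by ring⟩,
        pow_eq_one_dvd (hrc j ⟨hj0, hjM⟩) ⟨2 * Na * Nb * Nd, by ring⟩, one_mul]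
    · simp only [if_neg h]
      have hbi : seqInBox L (i - (L : ℤ)) := ⟨by omega, by push_cast at hi2 ⊢; omega⟩
      rw [mul_pow, pow_eq_one_dvd (hrb _ hbi) ⟨2 * Na * Nc * Nd, by ring⟩,
        pow_eq_one_dvd (hrd j ⟨hj0, hjM⟩) ⟨2 * Na * Nb * Nc, by ring⟩, one_mul]
  have hpolyB : matPolyphase (2 * L) M B := by
    refine ⟨hBz, 2 * Na * Nb * Nc * Nd, by positivity, ?_⟩
    intro i j hbox
    obtain ⟨hi0, hi2, hj0, hjM⟩ := hbox
    have hjidx : seqInBox M ((M : ℤ) - 1 - j) := ⟨by omega, by omega⟩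
    rw [hB]
    by_cases h : i < (L : ℤ)
    · simp only [if_pos h]
      have hsplit : (-a i * (starRingEnd ℂ) (d ((M : ℤ) - 1 - j))) ^ (2 * Na * Nb * Nc * Nd) =
          (-1 : ℂ) ^ (2 * Na * Nb * Nc * Nd) * a i ^ (2 * Na * Nb * Nc * Nd) *
          ((starRingEnd ℂ) (d ((M : ℤ) - 1 - j))) ^ (2 * Na * Nb * Nc * Nd) := by ring
      have hm1 : (-1 : ℂ) ^ (2 * Na * Nb * Nc * Nd) = 1 := by
        rw [show 2 * Na * Nb * Nc * Nd = 2 * (Na * Nb * Nc * Nd) from by ring, pow_mul]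
        norm_num
      have hda : ((starRingEnd ℂ) (d ((M : ℤ) - 1 - j))) ^ (2 * Na * Nb * Nc * Nd) = 1 := by
        rw [← map_pow, pow_eq_one_dvd (hrd _ hjidx) ⟨2 * Na * Nb * Nc, by ring⟩, map_one]
      rw [hsplit, hm1, pow_eq_one_dvd (hra i ⟨hi0, h⟩) ⟨2 * Nb * Nc * Nd, by ring⟩, hda]
      ring
    · simp only [if_neg h]
      have hbi : seqInBox L (i - (L : ℤ)) := ⟨by omega, by push_cast at hi2 ⊢; omega⟩
      have hca : ((starRingEnd ℂ) (c ((M : ℤ) - 1 - j))) ^ (2 * Na * Nb * Nc * Nd) = 1 := by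
        rw [← map_pow, pow_eq_one_dvd (hrc _ hjidx) ⟨2 * Na * Nb * Nd, by ring⟩, map_one]
      rw [mul_pow, pow_eq_one_dvd (hrb _ hbi) ⟨2 * Na * Nc * Nd, by ring⟩, hca, one_mul]
  refine ⟨hpolyA, hpolyB, ?_⟩
  have hkey := key_corr L M a b c d ha.1 hb.1 hc.1 hd.1 A B hA hB
  have hw : ((matWeight A + matWeight B : ℝ) : ℂ) =
      ((seqWeight a + seqWeight b : ℝ) : ℂ) * ((seqWeight c + seqWeight d : ℝ) : ℂ) := by
    rw [Complex.ofReal_add, matWeight_cast A hAz, matWeight_cast B hBz]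
    rw [hkey 0 0, hab 0, hcd 0]
    simp
  intro δ₁ δ₂
  rw [hkey δ₁ δ₂, hab δ₁, hcd δ₂]
  by_cases h1 : δ₁ = 0 <;> by_cases h2 : δ₂ = 0 <;> simp [h1, h2, hw]
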